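/- In the redundant remapping scheme, the maximum over processors of assigned work is O(w/p + ŵ) and the maximum assigned output volume is O(m/p + m̂), where the hidden constants can be taken as 2 and additive terms ŵ and m̂ respectively: max_i (work of PE i) ≤ 2w'/p + ŵ and max_i (output of PE i) ≤ 2m'/p + m̂, given w' ≤ w and m' ≤ m. -/

import Mathlib

theorem redundant_remapping_max_bounds {α : Type*} (A : Finset α) (w_ o_ : α → ℝ)
    (hw : ∀ a ∈ A, 0 ≤ w_ a) (ho : ∀ a ∈ A, 0 ≤ o_ a)
    (wHat mHat : ℝ) (hwHat : ∀ a ∈ A, w_ a ≤ wHat) (hmHat : ∀ a ∈ A, o_ a ≤ mHat)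
    (w' m' w m : ℝ) (hw' : w' = ∑ a ∈ A, w_ a) (hm' : m' = ∑ a ∈ A, o_ a)
    (hw'pos : 0 < w') (hm'pos : 0 < m') (hw'le : w' ≤ w) (hm'le : m' ≤ m)
    (W : α → ℝ) (hW : ∀ a, W a = w_ a + o_ a * (w' / m'))
    (Wtot : ℝ) (hWtot : Wtot = 2 * w')
    (p : ℕ) (hp : 0 < p)
    (R : Fin p → Finset α) (hR : ∀ i, R i ⊆ A)
    (ov : Fin p → Option α) (hov : ∀ i, ∀ a ∈ (ov i), a ∈ A)
    (hbal : ∀ i, ∑ a ∈ R i, W a ≤ Wtot / p) :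
    (Finset.univ.sup' (Finset.univ_nonempty_iff.mpr ⟨⟨0, hp⟩⟩)
        fun i : Fin p => (∑ a ∈ R i, w_ a) + (ov i).elim 0 w_) ≤ 2 * w' / p + wHat ∧
    (Finset.univ.sup' (Finset.univ_nonempty_iff.mpr ⟨⟨0, hp⟩⟩)
        fun i : Fin p => (∑ a ∈ R i, o_ a) + (ov i).elim 0 o_) ≤ 2 * m' / p + mHat := by
  have hAne : A.Nonempty := by
    by_contra h
    rw [Finset.not_nonempty_iff_eq_empty] at h
    rw [h, Finset.sum_empty] at hw'
    linarith
  obtain ⟨a0, ha0⟩ := hAne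
  have hwHat0 : 0 ≤ wHat := le_trans (hw a0 ha0) (hwHat a0 ha0)
  have hmHat0 : 0 ≤ mHat := le_trans (ho a0 ha0) (hmHat a0 ha0)
  have hratio : 0 ≤ w' / m' := le_of_lt (div_pos hw'pos hm'pos)
  have hbal' : ∀ i, ∑ a ∈ R i, W a ≤ 2 * w' / p := by
    intro i; have := hbal i; rwa [hWtot] at this
  constructor
  · apply Finset.sup'_le
    intro i _
    have h1 : ∑ a ∈ R i, w_ a ≤ ∑ a ∈ R i, W a := by
      apply Finset.sum_le_sum
      intro a ha
      rw [hW a]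
      have := ho a (hR i ha)
      nlinarith
    have h2 : (ov i).elim 0 w_ ≤ wHat := by
      cases hv : ov i with
      | none => simpa using hwHat0
      | some a =>
        have : a ∈ A := hov i a (by rw [hv]; rfl)
        simpa using hwHat a this
    linarith [hbal' i]
  · apply Finset.sup'_le
    intro i _
    have h1 : (∑ a ∈ R i, o_ a) * (w' / m') ≤ ∑ a ∈ R i, W a := by
      rw [Finset.sum_mul]
      apply Finset.sum_le_sum
      intro a ha
      rw [hW a]
      have := hw a (hR i ha)
      linarith
    have h3 : (∑ a ∈ R i, o_ a) * (w' / m') ≤ 2 * w' / p := le_trans h1 (hbal' i)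
    have h4 : ∑ a ∈ R i, o_ a ≤ 2 * m' / p := by
      have hne : w' / m' > 0 := div_pos hw'pos hm'pos
      rw [← le_div_iff₀ hne] at h3
      calc ∑ a ∈ R i, o_ a ≤ 2 * w' / p / (w' / m') := h3
        _ = 2 * m' / p := by
          field_simp
    have h2 : (ov i).elim 0 o_ ≤ mHat := by
      cases hv : ov i with
      | none => simpa using hmHat0
      | some a =>
        have : a ∈ A := hov i a (by rw [hv]; rfl)
        simpa using hmHat a this
    linarith
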